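/- Let a, b > 0 and t ∈ [0, 1]. Define ΔSNR = (a² + b² + √(a⁴ + b⁴ + 2a²b²(2t² − 1))) / (2 max(a², b²)). Then ΔSNR is nondecreasing in t, and 1 ≤ ΔSNR ≤ 1 + min(a², b²)/max(a², b²) ≤ 2, with the lower bound achieved at t = 0 and the upper bound at t = 1. -/
import Mathlib


/-- SNR loss of dominant-path beamforming relative to optimal beamforming with
orthogonal transmit steering vectors: `ΔSNR` is nondecreasing in `t` on `[0,1]`,
and `1 ≤ ΔSNR ≤ 1 + min(a²,b²)/max(a²,b²) ≤ 2`, with the lower bound at `t = 0`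
and the upper bound at `t = 1`. -/
theorem stmt9 (a b : ℝ) (ha : 0 < a) (hb : 0 < b)
    (Δ : ℝ → ℝ)
    (hΔ : Δ = fun t => (a^2 + b^2 +
      Real.sqrt (a^4 + b^4 + 2 * a^2 * b^2 * (2 * t^2 - 1))) / (2 * max (a^2) (b^2))) :
    MonotoneOn Δ (Set.Icc (0 : ℝ) 1) ∧
    (∀ t ∈ Set.Icc (0 : ℝ) 1,
      1 ≤ Δ t ∧ Δ t ≤ 1 + min (a^2) (b^2) / max (a^2) (b^2) ∧ Δ t ≤ 2) ∧
    Δ 0 = 1 ∧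
    Δ 1 = 1 + min (a^2) (b^2) / max (a^2) (b^2) ∧
    1 + min (a^2) (b^2) / max (a^2) (b^2) ≤ 2 := by
  have hM : (0:ℝ) < max (a^2) (b^2) := lt_max_iff.2 (Or.inl (by positivity))
  have hmono : MonotoneOn Δ (Set.Icc (0 : ℝ) 1) := by
    intro s hs t ht hst
    rw [hΔ]
    simp only
    have hss : Real.sqrt (a^4 + b^4 + 2 * a^2 * b^2 * (2 * s^2 - 1)) ≤
        Real.sqrt (a^4 + b^4 + 2 * a^2 * b^2 * (2 * t^2 - 1)) :=
      Real.sqrt_le_sqrt (by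
        have h2 : s^2 ≤ t^2 := pow_le_pow_left₀ hs.1 hst 2
        nlinarith [sq_nonneg (a*b), h2])
    gcongr
  have hΔ0 : Δ 0 = 1 := by
    have h0 : a^4 + b^4 + 2 * a^2 * b^2 * (2 * (0:ℝ)^2 - 1) = (a^2 - b^2)^2 := by ring
    rw [hΔ]; simp only [h0, Real.sqrt_sq_eq_abs]
    rcases le_total (a^2) (b^2) with h | h
    · rw [max_eq_right h, abs_of_nonpos (by linarith)]
      field_simp; ring
    · rw [max_eq_left h, abs_of_nonneg (by linarith)]
      field_simp; ring
  have hΔ1 : Δ 1 = 1 + min (a^2) (b^2) / max (a^2) (b^2) := by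
    have h1 : a^4 + b^4 + 2 * a^2 * b^2 * (2 * (1:ℝ)^2 - 1) = (a^2 + b^2)^2 := by ring
    rw [hΔ]; simp only [h1, Real.sqrt_sq (by positivity : (0:ℝ) ≤ a^2 + b^2)]
    rcases le_total (a^2) (b^2) with h | h
    · rw [max_eq_right h, min_eq_left h]
      field_simp; ring
    · rw [max_eq_left h, min_eq_right h]
      field_simp; ring
  have hle2 : 1 + min (a^2) (b^2) / max (a^2) (b^2) ≤ 2 := by
    have : min (a^2) (b^2) / max (a^2) (b^2) ≤ 1 :=
      div_le_one_of_le₀ (min_le_max) hM.le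
    linarith
  refine ⟨hmono, fun t ht => ?_, hΔ0, hΔ1, hle2⟩
  have h0m : (0:ℝ) ∈ Set.Icc (0:ℝ) 1 := by constructor <;> norm_num
  have h1m : (1:ℝ) ∈ Set.Icc (0:ℝ) 1 := by constructor <;> norm_num
  have hl := hmono h0m ht ht.1
  have hu := hmono ht h1m ht.2
  rw [hΔ0] at hl; rw [hΔ1] at hu
  exact ⟨hl, hu, hu.trans hle2⟩
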